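/- Let A be a Banach algebra and let A** denote its bidual equipped with the first Arens product. If the weak topological center of A** (the set of a'' in A** such that the map b'' ↦ a''b'' is weak*-to-weak continuous) equals all of A**, then A is Arens regular (i.e., the two Arens products on A** coincide). -/

import Mathlib

open NormedSpace ContinuousLinearMap

noncomputable section

section Core

instance (E : Type*) [SeminormedAddCommGroup E] [NormedSpace ℝ E] : AddCommGroup (StrongDual ℝ E) :=
  ContinuousLinearMap.addCommGroup

instance (E : Type*) [NonUnitalSeminormedRing E] [NormedSpace ℝ E] :
    SeminormedAddCommGroup (StrongDual ℝ E) :=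
  ContinuousLinearMap.toSeminormedAddCommGroup

variable (X Y Z : Type*)
  [NormedAddCommGroup X] [NormedSpace ℝ X]
  [NormedAddCommGroup Y] [NormedSpace ℝ Y]
  [NormedAddCommGroup Z] [NormedSpace ℝ Z]

/-- The dual (adjoint) map of a continuous linear map. -/
def dualMapCLM (T : X →L[ℝ] Y) : StrongDual ℝ Y →L[ℝ] StrongDual ℝ X :=
  (ContinuousLinearMap.compSL X Y ℝ (RingHom.id ℝ) (RingHom.id ℝ)).flip T

variable {X Y Z}

/-- The adjoint of a continuous bilinear map `m : X × Y → Z`, as a bilinear map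
`Z* × X → Y*`, `⟨adjBil m z' x, y⟩ = ⟨z', m x y⟩`. -/
def adjBil (m : X →L[ℝ] Y →L[ℝ] Z) : StrongDual ℝ Z →L[ℝ] X →L[ℝ] StrongDual ℝ Y :=
  ((ContinuousLinearMap.compSL X (Y →L[ℝ] Z) (StrongDual ℝ Y) (RingHom.id ℝ) (RingHom.id ℝ)).flip m).comp
    (ContinuousLinearMap.compSL Y Z ℝ (RingHom.id ℝ) (RingHom.id ℝ))

/-- The first Arens extension of a continuous bilinear map `X × Y → Z`
to the biduals, `X** × Y** → Z**`. -/
def arensExt (m : X →L[ℝ] Y →L[ℝ] Z) :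
    StrongDual ℝ (StrongDual ℝ X) →L[ℝ] StrongDual ℝ (StrongDual ℝ Y) →L[ℝ] StrongDual ℝ (StrongDual ℝ Z) :=
  adjBil (adjBil (adjBil m))

variable (E : Type*) [NormedAddCommGroup E] [NormedSpace ℝ E]

/-- The weak-* topology on the bidual `E**`, i.e. the topology of pointwise
convergence on `E*`. -/
def weakStarTop : TopologicalSpace (StrongDual ℝ (StrongDual ℝ E)) :=
  ⨅ f : StrongDual ℝ E, TopologicalSpace.induced (fun F => F f) inferInstance

/-- The weak topology on the bidual `E**`, i.e. the topology of pointwise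
convergence on `E***`. -/
def weakTop : TopologicalSpace (StrongDual ℝ (StrongDual ℝ E)) :=
  ⨅ Φ : StrongDual ℝ (StrongDual ℝ (StrongDual ℝ E)), TopologicalSpace.induced (fun F => Φ F) inferInstance

end Core

section Algebra

variable (A : Type*) [NonUnitalNormedRing A] [NormedSpace ℝ A]
  [IsScalarTower ℝ A A] [SMulCommClass ℝ A A]

/-- The first Arens product on the bidual of a Banach algebra. -/
def arens1 : StrongDual ℝ (StrongDual ℝ A) →L[ℝ] StrongDual ℝ (StrongDual ℝ A) →L[ℝ] StrongDual ℝ (StrongDual ℝ A) :=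
  arensExt (ContinuousLinearMap.mul ℝ A)

/-- The second Arens product on the bidual of a Banach algebra. -/
def arens2 (F G : StrongDual ℝ (StrongDual ℝ A)) : StrongDual ℝ (StrongDual ℝ A) :=
  arensExt ((ContinuousLinearMap.mul ℝ A).flip) G F

/-- The weak left topological center of `A**`: those `F` such that
`G ↦ F □ G` is weak-*-to-weak continuous. -/
def weakLeftCenter : Set (StrongDual ℝ (StrongDual ℝ A)) :=
  { F | ∀ Φ : StrongDual ℝ (StrongDual ℝ (StrongDual ℝ A)),
      @Continuous _ _ (weakStarTop A) _ fun G => Φ (arens1 A F G) }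

/-- The left topological center of `A**`: those `F` such that
`G ↦ F □ G` is weak-*-to-weak-* continuous. -/
def leftCenter : Set (StrongDual ℝ (StrongDual ℝ A)) :=
  { F | ∀ f : StrongDual ℝ A,
      @Continuous _ _ (weakStarTop A) _ fun G => arens1 A F G f }

end Algebra


section Aux

variable {E : Type*} [NormedAddCommGroup E] [NormedSpace ℝ E]

/-- Evaluation at `g` as a linear functional on the bidual. -/
def evalLM (g : StrongDual ℝ E) : StrongDual ℝ (StrongDual ℝ E) →ₗ[ℝ] ℝ where
  toFun G := G g
  map_add' := by intros; rfl
  map_smul' := by intros; rfl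

/-- Evaluation, as a linear map from `E*` to functionals on `E**`. -/
def evalL : StrongDual ℝ E →ₗ[ℝ] (StrongDual ℝ (StrongDual ℝ E) →ₗ[ℝ] ℝ) where
  toFun := evalLM
  map_add' g₁ g₂ := by ext G; exact map_add G g₁ g₂
  map_smul' c g := by ext G; exact map_smul G c g

lemma evalLM_continuous (g : StrongDual ℝ E) :
    @Continuous _ _ (weakStarTop E) _ fun G : StrongDual ℝ (StrongDual ℝ E) => G g := by
  rw [weakStarTop]
  exact continuous_iInf_dom (i := g)
    (continuous_induced_dom (f := fun G : StrongDual ℝ (StrongDual ℝ E) => G g) (t := inferInstance))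

/-- A weak-*-continuous linear functional on `E**` which vanishes on the canonical
image of `E` vanishes identically. -/
lemma key_vanish (φ : StrongDual ℝ (StrongDual ℝ E) →ₗ[ℝ] ℝ)
    (hc : @Continuous _ _ (weakStarTop E) _ φ)
    (hz : ∀ b : E, φ (inclusionInDoubleDual ℝ E b) = 0) : φ = 0 := by
  -- continuity at 0 gives a basic weak-* neighborhood inside `φ ⁻¹' Ioo (-1) 1`
  have h0 : φ ⁻¹' Set.Ioo (-1 : ℝ) 1 ∈ @nhds _ (weakStarTop E) 0 := by
    have htd := @Continuous.tendsto _ _ (weakStarTop E) _ _ hc 0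
    rw [map_zero] at htd
    exact htd (Ioo_mem_nhds (by norm_num) (by norm_num))
  rw [weakStarTop, nhds_iInf] at h0
  simp only [nhds_induced, ContinuousLinearMap.zero_apply] at h0
  obtain ⟨I, hIfin, V, hV, hUV⟩ := Filter.mem_iInf.mp h0
  haveI : Finite I := hIfin.to_subtype
  -- φ vanishes on the intersection of kernels of the evaluations at elements of I
  have hker : (⨅ i : I, LinearMap.ker (evalLM (E := E) (i : StrongDual ℝ E))) ≤ LinearMap.ker φ := by
    intro G hG
    simp only [Submodule.mem_iInf, LinearMap.mem_ker] at hG ⊢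
    by_contra hφG
    -- every scalar multiple of G lies in the neighborhood
    have hmem : ∀ t : ℝ, t • G ∈ φ ⁻¹' Set.Ioo (-1 : ℝ) 1 := by
      intro t
      rw [hUV]
      refine Set.mem_iInter.mpr fun i => ?_
      obtain ⟨W, hW, hWsub⟩ := Filter.mem_comap.mp (hV i)
      refine hWsub ?_
      have : (t • G) (i : StrongDual ℝ E) = 0 := by
        have := hG i
        simp only [evalLM, LinearMap.coe_mk, AddHom.coe_mk] at this
        simp [this]
      simpa [this] using mem_of_mem_nhds hW
    have habs := hmem ((2 : ℝ) / φ G)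
    simp only [Set.mem_preimage, map_smul, smul_eq_mul, Set.mem_Ioo] at habs
    rw [div_mul_cancel₀ _ hφG] at habs
    linarith [habs.2]
  -- hence φ is a finite linear combination of such evaluations
  have hspan : φ ∈ Submodule.span ℝ
      (Set.range fun i : I => evalLM (E := E) (i : StrongDual ℝ E)) :=
    mem_span_of_iInf_ker_le_ker hker
  have hrange : φ ∈ LinearMap.range (evalL (E := E)) := by
    refine Submodule.span_le.mpr ?_ hspan
    rintro - ⟨i, rfl⟩
    exact ⟨(i : StrongDual ℝ E), rfl⟩
  obtain ⟨g, hg⟩ := hrange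
  have hg0 : g = 0 := by
    ext b
    have := hz b
    rw [← hg] at this
    simpa [_root_.evalL, evalLM, NormedSpace.dual_def] using this
  rw [← hg, hg0, map_zero]

end Aux

/-- If the weak left topological center of `A**` is all of `A**`,
then `A` is Arens regular. -/
theorem stmt0 (A : Type*) [NonUnitalNormedRing A] [NormedSpace ℝ A]
    [IsScalarTower ℝ A A] [SMulCommClass ℝ A A] [CompleteSpace A]
    (h : weakLeftCenter A = Set.univ) :
    ∀ F G : StrongDual ℝ (StrongDual ℝ A), arens1 A F G = arens2 A F G := by
  intro F G
  have hF : F ∈ weakLeftCenter A := h ▸ Set.mem_univ F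
  ext f
  -- the difference functional
  set φ : StrongDual ℝ (StrongDual ℝ A) →ₗ[ℝ] ℝ :=
    { toFun := fun G => arens1 A F G f - arens2 A F G f
      map_add' := by
        intro G₁ G₂
        simp only [arens2, map_add, ContinuousLinearMap.add_apply]
        ring
      map_smul' := by
        intro c G
        simp only [arens2, map_smul, ContinuousLinearMap.smul_apply, RingHom.id_apply,
          smul_eq_mul]
        ring } with hφdef
  have hc : @Continuous _ _ (weakStarTop A) _ φ := by
    letI : TopologicalSpace (StrongDual ℝ (StrongDual ℝ A)) := weakStarTop A
    have h1 : @Continuous _ _ (weakStarTop A) _ fun G => arens1 A F G f :=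
      hF (inclusionInDoubleDual ℝ (StrongDual ℝ A) f)
    have h2 : @Continuous _ _ (weakStarTop A) _ fun G => arens2 A F G f := by
      have h2' := evalLM_continuous (E := A)
        (adjBil (adjBil ((ContinuousLinearMap.mul ℝ A).flip)) F f)
      exact h2'
    exact h1.sub h2
  have hz : ∀ b : A, φ (inclusionInDoubleDual ℝ A b) = 0 := by
    intro b
    have : arens1 A F (inclusionInDoubleDual ℝ A b) f
        = arens2 A F (inclusionInDoubleDual ℝ A b) f := by
      have hv : adjBil (adjBil (ContinuousLinearMap.mul ℝ A)) (inclusionInDoubleDual ℝ A b) f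
          = adjBil ((ContinuousLinearMap.mul ℝ A).flip) f b := by
        ext x; rfl
      show F (adjBil (adjBil (ContinuousLinearMap.mul ℝ A))
        (inclusionInDoubleDual ℝ A b) f) = _
      rw [hv]
      rfl
    simp [hφdef, this]
  have hφ0 := key_vanish φ hc hz
  have := LinearMap.congr_fun hφ0 G
  simp only [hφdef, LinearMap.coe_mk, AddHom.coe_mk, LinearMap.zero_apply] at this
  linarith

end
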